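/- In the Burning Algorithm on the auxiliary graph G_{A,C}, the configuration η(h) (equal to h on A, 0 on C, and 1 on the attached path vertices) is recurrent or not independently of the path lengths m_y: whether η(h) ∈ R_{G_{A,C}} does not depend on the choice of m_y ≥ 1 for y ∈ (∂A)\C. -/

import Mathlib

noncomputable section

open scoped Classical

/-- Unburnt sets of the Burning Algorithm on a graph `H` with sink `sink`:
`U 0` is everything except the sink and
`U (n+1) = {w ∈ U n : η w < deg_{U n} w}`. -/
def burnU {W : Type*} (H : SimpleGraph W) (sink : W) (η : W → ℕ) : ℕ → Set W
  | 0 => {w | w ≠ sink}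
  | n + 1 => {w ∈ burnU H sink η n |
      η w < (H.neighborSet w ∩ burnU H sink η n).ncard}

/-- The Burning Algorithm terminates (everything burns), i.e. the configuration is
recurrent (= allowed). -/
def BurningTerminates {W : Type*} (H : SimpleGraph W) (sink : W) (η : W → ℕ) : Prop :=
  ∃ i : ℕ, burnU H sink η i = ∅

/-- The outer vertex boundary of `A`. -/
def outerBd {V : Type*} (G : SimpleGraph V) (A : Set V) : Set V :=
  {v : V | v ∉ A ∧ ∃ a ∈ A, G.Adj v a}

/-- Vertex set of the auxiliary graph `G_{A,C}`: the vertices of `A ∪ ∂A`, the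
internal vertices of the glued paths (for `y ∈ ∂A \ C`, a path of length `m y` has
`m y − 1` internal vertices), and the sink. -/
abbrev AuxV {V : Type*} (G : SimpleGraph V) (A C : Set V)
    (m : ↥(outerBd G A \ C) → ℕ) : Type _ :=
  ↥(A ∪ outerBd G A) ⊕ (((y : ↥(outerBd G A \ C)) × Fin (m y - 1)) ⊕ Unit)

/-- Adjacency generating relation of `G_{A,C}`: the subgraph of `G` induced by
`A ∪ ∂A`, together with, for each `y ∈ ∂A \ C`, a glued path
`y, p_0, …, p_{m y − 2}, s` of length `m y` (a direct edge `y – s` when `m y = 1`). -/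
def auxRel {V : Type*} (G : SimpleGraph V) (A C : Set V)
    (m : ↥(outerBd G A \ C) → ℕ) :
    AuxV G A C m → AuxV G A C m → Prop := fun u v =>
  match u, v with
  | Sum.inl a, Sum.inl b => G.Adj a.val b.val
  | Sum.inl a, Sum.inr (Sum.inl p) => a.val = p.1.val ∧ (p.2 : ℕ) = 0
  | Sum.inl a, Sum.inr (Sum.inr _) =>
      ∃ h : a.val ∈ outerBd G A \ C, m ⟨a.val, h⟩ = 1
  | Sum.inr (Sum.inl p), Sum.inr (Sum.inl q) =>
      p.1 = q.1 ∧ (p.2 : ℕ) + 1 = (q.2 : ℕ)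
  | Sum.inr (Sum.inl p), Sum.inr (Sum.inr _) => (p.2 : ℕ) + 2 = m p.1
  | _, _ => False

/-- The auxiliary graph `G_{A,C}`. -/
def auxGraph {V : Type*} (G : SimpleGraph V) (A C : Set V)
    (m : ↥(outerBd G A \ C) → ℕ) : SimpleGraph (AuxV G A C m) :=
  SimpleGraph.fromRel (auxRel G A C m)

/-- The configuration `η(h)`: equal to `h` on `A`, to `0` on `C`, and to `1` on the
remaining boundary vertices and on the internal path vertices. -/
def auxConfig {V : Type*} (G : SimpleGraph V) (A C : Set V)
    (m : ↥(outerBd G A \ C) → ℕ) (h : ↥A → ℕ) : AuxV G A C m → ℕ := fun w =>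
  match w with
  | Sum.inl a => if ha : a.val ∈ A then h ⟨a.val, ha⟩
      else if a.val ∈ C then 0 else 1
  | Sum.inr (Sum.inl _) => 1
  | Sum.inr (Sum.inr _) => 0


lemma neighborSet_finite_of_reg {V : Type*} (G : SimpleGraph V) (d : ℕ) (hd : 3 ≤ d)
    (hreg : ∀ v : V, (G.neighborSet v).ncard = d) (v : V) :
    (G.neighborSet v).Finite := by
  by_contra hinf
  have := Set.Infinite.ncard hinf
  rw [hreg v] at this
  omega

lemma outerBd_finite {V : Type*} (G : SimpleGraph V) (d : ℕ) (hd : 3 ≤ d)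
    (hreg : ∀ v : V, (G.neighborSet v).ncard = d) (A : Set V) (hA : A.Finite) :
    (outerBd G A).Finite := by
  refine (hA.biUnion (fun a _ => neighborSet_finite_of_reg G d hd hreg a)).subset ?_
  rintro v ⟨-, a, ha, hadj⟩
  exact Set.mem_biUnion ha hadj.symm

def SelfSust {W : Type*} (H : SimpleGraph W) (s : W) (η : W → ℕ) : Prop :=
  ∃ F : Set W, F.Nonempty ∧ ∀ w ∈ F, w ≠ s ∧ η w < (H.neighborSet w ∩ F).ncard

lemma burnU_succ_subset {W : Type*} (H : SimpleGraph W) (s : W) (η : W → ℕ) (n : ℕ) :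
    burnU H s η (n+1) ⊆ burnU H s η n := fun _ hw => hw.1

lemma burnU_subset_zero {W : Type*} (H : SimpleGraph W) (s : W) (η : W → ℕ) (n : ℕ) :
    burnU H s η n ⊆ burnU H s η 0 := by
  induction n with
  | zero => exact subset_rfl
  | succ n ih => exact (burnU_succ_subset H s η n).trans ih

lemma terminates_iff {W : Type*} [Finite W] (H : SimpleGraph W) (s : W) (η : W → ℕ) :
    BurningTerminates H s η ↔ ¬ SelfSust H s η := by
  constructor
  · rintro ⟨i, hi⟩ ⟨F, hFne, hF⟩
    have hsub : ∀ n, F ⊆ burnU H s η n := by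
      intro n
      induction n with
      | zero => intro w hw; exact (hF w hw).1
      | succ n ih =>
        intro w hw
        refine ⟨ih hw, lt_of_lt_of_le (hF w hw).2 ?_⟩
        exact Set.ncard_le_ncard (Set.inter_subset_inter_right _ ih) (Set.toFinite _)
    obtain ⟨w, hw⟩ := hFne
    exact absurd (hi ▸ hsub i hw) (Set.notMem_empty w)
  · intro hns
    by_contra hnt
    have hne : ∀ n, (burnU H s η n).Nonempty := by
      intro n
      rcases Set.eq_empty_or_nonempty (burnU H s η n) with he | hne
      · exact absurd ⟨n, he⟩ hnt
      · exact hne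
    have hstrict : ∀ n, burnU H s η (n+1) ⊂ burnU H s η n := by
      intro n
      refine (burnU_succ_subset H s η n).ssubset_of_ne ?_
      intro heq
      apply hns
      refine ⟨burnU H s η n, hne n, fun w hw => ?_⟩
      have hw' : w ∈ burnU H s η (n+1) := heq ▸ hw
      exact ⟨(burnU_subset_zero H s η n hw), hw'.2⟩
    have hcard : ∀ n, (burnU H s η n).ncard + n ≤ (burnU H s η 0).ncard := by
      intro n
      induction n with
      | zero => simp
      | succ n ih =>
        have := Set.ncard_lt_ncard (hstrict n) (Set.toFinite _)
        omega
    have h1 := hcard ((burnU H s η 0).ncard + 1)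
    have h2 : 0 < (burnU H s η ((burnU H s η 0).ncard + 1)).ncard :=
      Set.ncard_pos (Set.toFinite _) |>.mpr (hne _)
    omega

section Aux
variable {V : Type*} (G : SimpleGraph V) (A C : Set V)
  (m : ↥(outerBd G A \ C) → ℕ)

lemma aux_adj_inl_inl (a b : ↥(A ∪ outerBd G A)) :
    (auxGraph G A C m).Adj (Sum.inl a) (Sum.inl b) ↔ G.Adj a.val b.val := by
  rw [auxGraph, SimpleGraph.fromRel_adj]
  constructor
  · rintro ⟨hne, hr | hr⟩
    · exact hr
    · exact hr.symm
  · intro hadj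
    refine ⟨fun he => ?_, Or.inl hadj⟩
    exact G.ne_of_adj hadj (congrArg Subtype.val (Sum.inl_injective he))

lemma no_path_mem [Finite (AuxV G A C m)] (h : ↥A → ℕ)
    (F : Set (AuxV G A C m))
    (hF : ∀ w ∈ F, w ≠ Sum.inr (Sum.inr ()) ∧
      auxConfig G A C m h w < ((auxGraph G A C m).neighborSet w ∩ F).ncard) :
    ∀ (y : ↥(outerBd G A \ C)) (k : Fin (m y - 1)),
      Sum.inr (Sum.inl ⟨y, k⟩) ∉ F := by
  have hsink : (Sum.inr (Sum.inr ()) : AuxV G A C m) ∉ F := fun hs => (hF _ hs).1 rfl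
  -- key subsingleton step
  have key : ∀ (y : ↥(outerBd G A \ C)) (k : Fin (m y - 1)),
      (∀ k' : Fin (m y - 1), (k' : ℕ) = (k : ℕ) + 1 →
        Sum.inr (Sum.inl ⟨y, k'⟩) ∉ F) →
      Sum.inr (Sum.inl ⟨y, k⟩) ∉ F := by
    intro y k hnext hmem
    have hlt := (hF _ hmem).2
    have hcfg : auxConfig G A C m h (Sum.inr (Sum.inl ⟨y, k⟩)) = 1 := rfl
    rw [hcfg] at hlt
    -- classify elements of the intersection
    have hclass : ∀ w ∈ (auxGraph G A C m).neighborSet (Sum.inr (Sum.inl ⟨y, k⟩)) ∩ F,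
        (∃ a : ↥(A ∪ outerBd G A), w = Sum.inl a ∧ a.val = y.val ∧ (k : ℕ) = 0) ∨
        (∃ k' : Fin (m y - 1), w = Sum.inr (Sum.inl ⟨y, k'⟩) ∧ (k' : ℕ) + 1 = (k : ℕ)) := by
      rintro w ⟨hadj, hwF⟩
      rw [SimpleGraph.mem_neighborSet, auxGraph, SimpleGraph.fromRel_adj] at hadj
      obtain ⟨hne, hr | hr⟩ := hadj
      · -- auxRel (inr inl ⟨y,k⟩) w
        match w with
        | Sum.inl a => exact absurd hr id
        | Sum.inr (Sum.inl q) =>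
          obtain ⟨y', k'⟩ := q
          obtain ⟨h1, h2⟩ := hr
          cases h1
          exact absurd hwF (hnext k' h2.symm)
        | Sum.inr (Sum.inr u) => exact absurd hwF hsink
      · -- auxRel w (inr inl ⟨y,k⟩)
        match w with
        | Sum.inl a => exact Or.inl ⟨a, rfl, hr.1, hr.2⟩
        | Sum.inr (Sum.inl q) =>
          obtain ⟨y', k'⟩ := q
          obtain ⟨h1, h2⟩ := hr
          cases h1
          exact Or.inr ⟨k', rfl, h2⟩
        | Sum.inr (Sum.inr u) => exact absurd hr id
    have hss : ((auxGraph G A C m).neighborSet (Sum.inr (Sum.inl ⟨y, k⟩)) ∩ F).ncard ≤ 1 := by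
      rw [Set.ncard_le_one_iff (Set.toFinite _)]
      intro w1 w2 hw1 hw2
      rcases hclass w1 hw1 with ⟨a1, he1, ha1, hk1⟩ | ⟨k1, he1, hk1⟩ <;>
        rcases hclass w2 hw2 with ⟨a2, he2, ha2, hk2⟩ | ⟨k2, he2, hk2⟩
      · subst he1; subst he2
        exact congrArg Sum.inl (Subtype.ext (ha1.trans ha2.symm))
      · omega
      · omega
      · subst he1; subst he2
        have : k1 = k2 := Fin.ext (by omega)
        rw [this]
    omega
  intro y k
  -- downward induction: t measures distance to the end of the path
  suffices H : ∀ t (y : ↥(outerBd G A \ C)) (k : Fin (m y - 1)),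
      (k : ℕ) + 2 + t = m y → Sum.inr (Sum.inl ⟨y, k⟩) ∉ F by
    have hk := k.isLt
    exact H (m y - 2 - (k : ℕ)) y k (by omega) 
  intro t
  induction t with
  | zero =>
    intro y k hk
    refine key y k fun k' hk' => ?_
    have := k'.isLt
    omega
  | succ t ih =>
    intro y k hk
    refine key y k fun k' hk' => ?_
    exact ih y k' (by omega)

lemma selfSust_transfer [Finite (AuxV G A C m)] (h : ↥A → ℕ)
    (m' : ↥(outerBd G A \ C) → ℕ) :
    SelfSust (auxGraph G A C m) (Sum.inr (Sum.inr ())) (auxConfig G A C m h) →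
    SelfSust (auxGraph G A C m') (Sum.inr (Sum.inr ())) (auxConfig G A C m' h) := by
  rintro ⟨F, hFne, hF⟩
  have hF' : ∀ w ∈ F, w ≠ Sum.inr (Sum.inr ()) ∧
      auxConfig G A C m h w < ((auxGraph G A C m).neighborSet w ∩ F).ncard := hF
  have hnp := no_path_mem G A C m h F hF'
  have hsink : (Sum.inr (Sum.inr ()) : AuxV G A C m) ∉ F := fun hs => (hF _ hs).1 rfl
  -- every element of F is an inl
  have hinl : ∀ w ∈ F, ∃ b : ↥(A ∪ outerBd G A), w = Sum.inl b := by
    intro w hw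
    match w with
    | Sum.inl b => exact ⟨b, rfl⟩
    | Sum.inr (Sum.inl q) => exact absurd hw (hnp q.1 q.2)
    | Sum.inr (Sum.inr ()) => exact absurd hw hsink
  set S : Set ↥(A ∪ outerBd G A) := {b | Sum.inl b ∈ F} with hS
  -- the intersection sets are images of a common set
  have him : ∀ b : ↥(A ∪ outerBd G A),
      (auxGraph G A C m).neighborSet (Sum.inl b) ∩ F =
        Sum.inl '' {c ∈ S | G.Adj b.val c.val} := by
    intro b
    ext w
    constructor
    · rintro ⟨hadj, hwF⟩
      obtain ⟨c, rfl⟩ := hinl w hwF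
      exact ⟨c, ⟨hwF, (aux_adj_inl_inl G A C m b c).mp hadj⟩, rfl⟩
    · rintro ⟨c, ⟨hc, hadj⟩, rfl⟩
      exact ⟨(aux_adj_inl_inl G A C m b c).mpr hadj, hc⟩
  refine ⟨Sum.inl '' S, ?_, ?_⟩
  · obtain ⟨w, hw⟩ := hFne
    obtain ⟨b, rfl⟩ := hinl w hw
    exact ⟨Sum.inl b, b, hw, rfl⟩
  · rintro w ⟨b, hb, rfl⟩
    refine ⟨Sum.inl_ne_inr, ?_⟩
    have him' : (auxGraph G A C m').neighborSet (Sum.inl b) ∩ Sum.inl '' S =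
        Sum.inl '' {c ∈ S | G.Adj b.val c.val} := by
      ext w
      constructor
      · rintro ⟨hadj, c, hc, rfl⟩
        exact ⟨c, ⟨hc, (aux_adj_inl_inl G A C m' b c).mp hadj⟩, rfl⟩
      · rintro ⟨c, ⟨hc, hadj⟩, rfl⟩
        exact ⟨(aux_adj_inl_inl G A C m' b c).mpr hadj, c, hc, rfl⟩
    have hcfg : auxConfig G A C m' h (Sum.inl b) = auxConfig G A C m h (Sum.inl b) := rfl
    rw [him', hcfg, Set.ncard_image_of_injective _ Sum.inl_injective]
    have := (hF _ hb).2
    rwa [him b, Set.ncard_image_of_injective _ Sum.inl_injective] at this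
end Aux

/-- for the infinite `d`-regular tree `G` (`d ≥ 3`), a finite `A`,
`C ⊊ ∂A` and `h ∈ {0,…,d−1}^A`, whether the configuration `η(h)` on the auxiliary
graph `G_{A,C}` is recurrent (i.e. the Burning Algorithm terminates) does not depend
on the choice of the glued path lengths `m y ≥ 1`, `y ∈ ∂A \ C`. -/
theorem stmt_18 {V : Type*} (G : SimpleGraph V) (d : ℕ) (hd : 3 ≤ d)
    (hreg : ∀ v : V, (G.neighborSet v).ncard = d)
    (hconn : G.Connected) (hacyc : G.IsAcyclic)
    (A : Set V) (hA : A.Finite)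
    (C : Set V) (hC : C ⊆ outerBd G A) (hCne : C ≠ outerBd G A)
    (h : ↥A → ℕ) (hh : ∀ a : ↥A, h a < d)
    (m m' : ↥(outerBd G A \ C) → ℕ)
    (hm : ∀ y, 1 ≤ m y) (hm' : ∀ y, 1 ≤ m' y) :
    BurningTerminates (auxGraph G A C m) (Sum.inr (Sum.inr ()))
        (auxConfig G A C m h) ↔
      BurningTerminates (auxGraph G A C m') (Sum.inr (Sum.inr ()))
        (auxConfig G A C m' h) := by
  have hbd := outerBd_finite G d hd hreg A hA
  haveI h1 : Finite ↥(A ∪ outerBd G A) := (hA.union hbd).to_subtype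
  haveI h2 : Finite ↥(outerBd G A \ C) := (hbd.diff : (outerBd G A \ C).Finite).to_subtype
  haveI : Finite (AuxV G A C m) := by infer_instance
  haveI : Finite (AuxV G A C m') := by infer_instance
  rw [terminates_iff, terminates_iff]
  exact not_congr ⟨selfSust_transfer G A C m h m', selfSust_transfer G A C m' h m⟩
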